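/- Let Γ be a finite simple graph and Γ₁, Γ₂ induced subgraphs of Γ. Let w ∈ W_{Γ₁} and u, u' ∈ W_Γ be such that: (1) no reduced expression of u or u' begins with a letter from Γ₁ (i.e. |a·u| > |u| for all a ∈ Γ₁, and likewise for u'); (2) no reduced expression of u or u' ends with a letter from Γ₂ (i.e. |u·a| > |u| for all a ∈ Γ₂, likewise for u'); (3) u⁻¹ w u' ∈ W_{Γ₂}. Then w ∈ W_{Γ₁ ∩ Γ₂}, u = u', and u commutes with w. -/

import Mathlib

def racgRels {V : Type*} (G : SimpleGraph V) : Set (FreeGroup V) :=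
  {r | (∃ v, r = FreeGroup.of v * FreeGroup.of v) ∨
    ∃ u v, G.Adj u v ∧ r = FreeGroup.of u * FreeGroup.of v * FreeGroup.of u * FreeGroup.of v}

abbrev RACG {V : Type*} (G : SimpleGraph V) : Type _ := PresentedGroup (racgRels G)

def racgGen {V : Type*} (G : SimpleGraph V) (v : V) : RACG G := PresentedGroup.of v

def specialSubgroup {V : Type*} (G : SimpleGraph V) (S : Set V) : Subgroup (RACG G) :=
  Subgroup.closure (racgGen G '' S)

def linkSet {V : Type*} (G : SimpleGraph V) (S : Set V) : Set V :=
  {u | ∀ s ∈ S, G.Adj u s}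

noncomputable def wordLength {V : Type*} (G : SimpleGraph V) (g : RACG G) : ℕ :=
  sInf {n | ∃ l : List V, l.length = n ∧ (l.map (racgGen G)).prod = g}

lemma racgGen_sq {V : Type*} (G : SimpleGraph V) (v : V) :
    racgGen G v * racgGen G v = 1 := by
  have h : (QuotientGroup.mk (FreeGroup.of v * FreeGroup.of v) :
      PresentedGroup (racgRels G)) = 1 := by
    rw [QuotientGroup.eq_one_iff]
    exact Subgroup.subset_normalClosure (Or.inl ⟨v, rfl⟩)
  exact h

lemma racgGen_comm {V : Type*} (G : SimpleGraph V) {u v : V} (h : G.Adj u v) :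
    racgGen G u * racgGen G v * racgGen G u * racgGen G v = 1 := by
  have h' : (QuotientGroup.mk (FreeGroup.of u * FreeGroup.of v * FreeGroup.of u * FreeGroup.of v) :
      PresentedGroup (racgRels G)) = 1 := by
    rw [QuotientGroup.eq_one_iff]
    exact Subgroup.subset_normalClosure (Or.inr ⟨u, v, h, rfl⟩)
  exact h'

lemma racg_induce_lift {V : Type*} (G : SimpleGraph V) {S : Set V} {H : Type*} [Group H]
    (f : S → H) (hsq : ∀ v : S, f v * f v = 1)
    (hcomm : ∀ u v : S, G.Adj ↑u ↑v → f u * f v * f u * f v = 1) :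
    ∀ r ∈ racgRels (G.induce S), FreeGroup.lift f r = 1 := by
  rintro r (⟨v, rfl⟩ | ⟨u, v, hadj, rfl⟩)
  · simpa [map_mul] using hsq v
  · have h' : G.Adj ↑u ↑v := hadj
    simpa [map_mul] using hcomm u v h'

/-- The canonical homomorphism between special subgroups induced by an inclusion of
vertex sets. -/
def racgMapHom {V : Type*} (G : SimpleGraph V) {S T : Set V} (h : S ⊆ T) :
    RACG (G.induce S) →* RACG (G.induce T) :=
  PresentedGroup.toGroup (f := fun v : S => racgGen (G.induce T) ⟨v.1, h v.2⟩)
    (racg_induce_lift G _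
      (fun v => racgGen_sq _ _)
      (fun u v hadj => racgGen_comm (G.induce T) (by exact hadj)))

/-- The canonical homomorphism from the special subgroup on `S` to the full
right-angled Coxeter group. -/
def racgInclHom {V : Type*} (G : SimpleGraph V) (S : Set V) :
    RACG (G.induce S) →* RACG G :=
  PresentedGroup.toGroup (f := fun v : S => racgGen G ↑v)
    (racg_induce_lift G _
      (fun v => racgGen_sq _ _)
      (fun u v hadj => racgGen_comm G hadj))

section CoxSetup
variable {V : Type*} (G : SimpleGraph V)

open Classical in
/-- The Coxeter matrix of a right-angled Coxeter group. -/
noncomputable def racgCoxM : CoxeterMatrix V where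
  M := Matrix.of fun i j => if i = j then 1 else if G.Adj i j then 2 else 0
  isSymm := by
    ext i j
    simp only [Matrix.transpose_apply, Matrix.of_apply]
    by_cases h : i = j
    · simp [h]
    · simp only [if_neg h, if_neg (Ne.symm h)]
      by_cases hadj : G.Adj i j
      · rw [if_pos hadj, if_pos hadj.symm]
      · rw [if_neg hadj, if_neg (fun h' => hadj h'.symm)]
  diagonal i := by simp
  off_diagonal i j h := by
    simp only [Matrix.of_apply, if_neg h]
    split <;> omega

lemma racg_normalClosure_eq :
    Subgroup.normalClosure (racgRels G) =
      Subgroup.normalClosure (racgCoxM G).relationsSet := by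
  apply le_antisymm
  · apply Subgroup.normalClosure_le_normal
    rintro r (⟨v, rfl⟩ | ⟨a, b, hadj, rfl⟩)
    · apply Subgroup.subset_normalClosure
      refine ⟨(v, v), ?_⟩
      simp [Function.uncurry, CoxeterMatrix.relation, racgCoxM, pow_one]
    · apply Subgroup.subset_normalClosure
      refine ⟨(a, b), ?_⟩
      have hab : a ≠ b := hadj.ne
      simp only [Function.uncurry, CoxeterMatrix.relation, racgCoxM, Matrix.of_apply,
        if_neg hab, if_pos hadj]
      rw [pow_two]
      group
  · apply Subgroup.normalClosure_le_normal
    rintro r ⟨⟨a, b⟩, rfl⟩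
    by_cases hab : a = b
    · subst hab
      apply Subgroup.subset_normalClosure
      left
      exact ⟨a, by simp [Function.uncurry, CoxeterMatrix.relation, racgCoxM, pow_one]⟩
    · by_cases hadj : G.Adj a b
      · apply Subgroup.subset_normalClosure
        right
        refine ⟨a, b, hadj, ?_⟩
        simp only [Function.uncurry, CoxeterMatrix.relation, racgCoxM, Matrix.of_apply,
          if_neg hab, if_pos hadj]
        rw [pow_two]
        group
      · have : CoxeterMatrix.relation (racgCoxM G) a b = 1 := by
          simp [Function.uncurry, CoxeterMatrix.relation, racgCoxM, if_neg hab, if_neg hadj]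
        simp only [Function.uncurry]
        rw [this]
        exact Subgroup.one_mem _

/-- RACG is isomorphic to the Coxeter group of its Coxeter matrix. -/
noncomputable def racgEquiv : RACG G ≃* (racgCoxM G).Group :=
  QuotientGroup.quotientMulEquivOfEq (racg_normalClosure_eq G)

/-- The Coxeter system on the RACG. -/
noncomputable def racgCS : CoxeterSystem (racgCoxM G) (RACG G) := ⟨racgEquiv G⟩

lemma racgCS_simple (i : V) : (racgCS G).simple i = racgGen G i := rfl

lemma racgCS_wordProd (l : List V) :
    (racgCS G).wordProd l = (l.map (racgGen G)).prod := by
  have h : (racgCS G).simple = racgGen G := rfl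
  simp [CoxeterSystem.wordProd, h]

lemma wordLength_eq (g : RACG G) : wordLength G g = (racgCS G).length g := by
  apply le_antisymm
  · obtain ⟨ω, hlen, hprod⟩ := (racgCS G).exists_reduced_word g
    apply Nat.sInf_le
    exact ⟨ω, by rw [hprod]; exact hlen.symm, by rw [← racgCS_wordProd, ← hprod]⟩
  · have hne : {n | ∃ l : List V, l.length = n ∧ (l.map (racgGen G)).prod = g}.Nonempty := by
      obtain ⟨ω, hlen, hprod⟩ := (racgCS G).exists_reduced_word g
      exact ⟨ω.length, ω, rfl, by rw [← racgCS_wordProd, ← hprod]⟩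
    obtain ⟨l, hlen, hprod⟩ := Nat.sInf_mem hne
    rw [wordLength, ← hlen]
    have : (racgCS G).wordProd l = g := by rw [racgCS_wordProd]; exact hprod
    rw [← this]
    exact (racgCS G).length_wordProd_le l

end CoxSetup

section Ab
variable {V : Type*} (G : SimpleGraph V)

open Classical in
private lemma pi_single_self_add {c : V} :
    (Pi.single c (1 : ZMod 2) : V → ZMod 2) + Pi.single c 1 = 0 := by
  funext x
  by_cases h : x = c
  · subst h
    simp only [Pi.add_apply, Pi.single_eq_same, Pi.zero_apply]
    decide
  · simp [Pi.single_apply, h]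

open Classical in
/-- The mod-2 abelianization of a RACG. -/
noncomputable def racgAb : RACG G →* Multiplicative (V → ZMod 2) :=
  PresentedGroup.toGroup (f := fun v => Multiplicative.ofAdd (Pi.single v 1))
    (by
      rintro r (⟨v, rfl⟩ | ⟨a, b, hadj, rfl⟩)
      · rw [map_mul, FreeGroup.lift_apply_of, ← ofAdd_add, pi_single_self_add]
        rfl
      · simp only [map_mul, FreeGroup.lift_apply_of, ← ofAdd_add]
        have : (Pi.single a (1 : ZMod 2) : V → ZMod 2) + Pi.single b 1 + Pi.single a 1
            + Pi.single b 1 = 0 := by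
          calc (Pi.single a (1 : ZMod 2) : V → ZMod 2) + Pi.single b 1 + Pi.single a 1
              + Pi.single b 1
              = (Pi.single a 1 + Pi.single a 1) + (Pi.single b 1 + Pi.single b 1) := by abel
            _ = 0 := by rw [pi_single_self_add, pi_single_self_add]; simp
        rw [this]
        rfl)

open Classical in
lemma racgAb_gen (v : V) : racgAb G (racgGen G v) = Multiplicative.ofAdd (Pi.single v 1) :=
  PresentedGroup.toGroup.of _

open Classical in
lemma racgAb_support {S : Set V} {g : RACG G} (hg : g ∈ specialSubgroup G S) :
    ∀ x, x ∉ S → Multiplicative.toAdd (racgAb G g) x = 0 := by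
  induction hg using Subgroup.closure_induction'' with
  | one => intro x _; simp
  | mem y hy =>
    obtain ⟨v, hv, rfl⟩ := hy
    intro x hx
    rw [racgAb_gen]
    have hxv : x ≠ v := fun h => hx (h ▸ hv)
    rw [toAdd_ofAdd, Pi.single_apply, if_neg hxv]
  | inv_mem y hy =>
    obtain ⟨v, hv, rfl⟩ := hy
    intro x hx
    have hxv : x ≠ v := fun h => hx (h ▸ hv)
    rw [map_inv, toAdd_inv, racgAb_gen, toAdd_ofAdd]
    simp only [Pi.neg_apply, Pi.single_apply, if_neg hxv, neg_zero]
  | mul y z _ _ ihy ihz =>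
    intro x hx
    rw [map_mul]
    have : Multiplicative.toAdd (racgAb G y * racgAb G z)
        = Multiplicative.toAdd (racgAb G y) + Multiplicative.toAdd (racgAb G z) := rfl
    rw [this]
    simp [ihy x hx, ihz x hx]

open Classical in
lemma racgGen_injective_ab {a b : V} (h : racgAb G (racgGen G a) = racgAb G (racgGen G b)) :
    a = b := by
  rw [racgAb_gen, racgAb_gen] at h
  have h' : (Pi.single a (1 : ZMod 2) : V → ZMod 2) = Pi.single b 1 :=
    congrArg Multiplicative.toAdd h
  by_contra hab
  have := congrFun h' a
  rw [Pi.single_eq_same, Pi.single_apply, if_neg hab] at this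
  exact one_ne_zero this

/-- If a generator is in a special subgroup, its vertex is in the set. -/
lemma racgGen_mem_special {S : Set V} {c : V} (h : racgGen G c ∈ specialSubgroup G S) :
    c ∈ S := by
  classical
  by_contra hc
  have h2 := racgAb_support G h c hc
  rw [racgAb_gen, toAdd_ofAdd, Pi.single_eq_same] at h2
  exact one_ne_zero h2

end Ab

section PermRep
variable {V : Type*} (G : SimpleGraph V)

lemma racgGen_inv (i : V) : (racgGen G i)⁻¹ = racgGen G i :=
  inv_eq_of_mul_eq_one_right (racgGen_sq G i)

lemma conj_gen_eq_iff (i : V) (x y : RACG G) :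
    racgGen G i * x * racgGen G i = y ↔ x = racgGen G i * y * racgGen G i := by
  have h := racgGen_sq G i
  constructor
  · rintro rfl
    have h2 : racgGen G i * (racgGen G i * x * racgGen G i) * racgGen G i
        = (racgGen G i * racgGen G i) * x * (racgGen G i * racgGen G i) := by group
    rw [h2, h, one_mul, mul_one]
  · rintro rfl
    have h2 : racgGen G i * (racgGen G i * y * racgGen G i) * racgGen G i
        = (racgGen G i * racgGen G i) * y * (racgGen G i * racgGen G i) := by group
    rw [h2, h, one_mul, mul_one]

open Classical in
/-- The Björner–Brenti style flip map used to build the sign permutation representation. -/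
noncomputable def flipF (i : V) : RACG G × Bool → RACG G × Bool :=
  fun p => (racgGen G i * p.1 * racgGen G i, if p.1 = racgGen G i then !p.2 else p.2)

open Classical in
lemma flipF_involutive (i : V) : Function.Involutive (flipF G i) := by
  intro p
  obtain ⟨x, ε⟩ := p
  simp only [flipF]
  have hcond : (racgGen G i * x * racgGen G i = racgGen G i) ↔ (x = racgGen G i) := by
    rw [conj_gen_eq_iff]
    rw [racgGen_sq, one_mul]
  have hconj : racgGen G i * (racgGen G i * x * racgGen G i) * racgGen G i = x := by
    have h2 : racgGen G i * (racgGen G i * x * racgGen G i) * racgGen G i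
        = (racgGen G i * racgGen G i) * x * (racgGen G i * racgGen G i) := by group
    rw [h2, racgGen_sq, one_mul, mul_one]
  simp only [hcond, hconj]
  by_cases hx : x = racgGen G i <;> simp [hx]

open Classical in
lemma permRep_liftable :
    ∀ r ∈ racgRels G, FreeGroup.lift (fun i => (flipF_involutive G i).toPerm) r = 1 := by
  rintro r (⟨v, rfl⟩ | ⟨a, b, hadj, rfl⟩)
  · rw [map_mul, FreeGroup.lift_apply_of]
    refine Equiv.ext fun p => ?_
    rw [Equiv.Perm.mul_apply, Equiv.Perm.one_apply]
    exact flipF_involutive G v p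
  · simp only [map_mul, FreeGroup.lift_apply_of]
    refine Equiv.ext fun p => ?_
    obtain ⟨x, ε⟩ := p
    rw [Equiv.Perm.mul_apply, Equiv.Perm.mul_apply, Equiv.Perm.mul_apply,
      Equiv.Perm.one_apply]
    set sa := racgGen G a with hsa
    set sb := racgGen G b with hsb
    have hsqa : sa * sa = 1 := racgGen_sq G a
    have hsqb : sb * sb = 1 := racgGen_sq G b
    have hinva : sa⁻¹ = sa := racgGen_inv G a
    have hinvb : sb⁻¹ = sb := racgGen_inv G b
    have hcab : sa * sb * sa * sb = 1 := racgGen_comm G hadj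
    have hcba : sb * sa * sb * sa = 1 := racgGen_comm G hadj.symm
    have hbab : sb * sa * sb = sa := by
      have h' : sa * (sb * sa * sb) = 1 := by rw [← mul_assoc, ← mul_assoc]; exact hcab
      have h2 := inv_eq_of_mul_eq_one_right h'
      rw [hinva] at h2
      exact h2.symm
    have haba : sa * sb * sa = sb := by
      have h' : sb * (sa * sb * sa) = 1 := by rw [← mul_assoc, ← mul_assoc]; exact hcba
      have h2 := inv_eq_of_mul_eq_one_right h'
      rw [hinvb] at h2
      exact h2.symm
    have hbbb : sb * sb * sb = sb := by rw [hsqb, one_mul]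
    have haaa : sa * sa * sa = sa := by rw [hsqa, one_mul]
    have P2 : ∀ y : RACG G, (sb * y * sb = sa) = (y = sa) := fun y =>
      propext (by rw [conj_gen_eq_iff, ← hsb, hbab])
    have P3 : ∀ y : RACG G, (sa * y * sa = sb) = (y = sb) := fun y =>
      propext (by rw [conj_gen_eq_iff, ← hsa, haba])
    have P5 : ∀ y : RACG G, (sa * y * sa = sa) = (y = sa) := fun y =>
      propext (by rw [conj_gen_eq_iff, ← hsa, haaa])
    have P6 : ∀ y : RACG G, (sb * y * sb = sb) = (y = sb) := fun y =>
      propext (by rw [conj_gen_eq_iff, ← hsb, hbbb])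
    show flipF G a (flipF G b (flipF G a (flipF G b (x, ε)))) = (x, ε)
    simp only [flipF, ← hsa, ← hsb]
    have key : sa * (sb * (sa * (sb * x * sb) * sa) * sb) * sa = x := by
      have h2 : sa * (sb * (sa * (sb * x * sb) * sa) * sb) * sa
          = (sa * sb * sa * sb) * x * (sb * sa * sb * sa) := by group
      rw [h2, hcab, hcba, one_mul, mul_one]
    refine Prod.ext ?_ ?_
    · exact key
    · simp only [P2, P3, P5, P6]
      by_cases h1 : x = sb <;> by_cases h2 : x = sa
      · simp only [eq_true h1, eq_true h2, if_true, Bool.not_not]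
      · simp only [eq_true h1, eq_false h2, if_true, if_false, Bool.not_not]
      · simp only [eq_false h1, eq_true h2, if_true, if_false, Bool.not_not]
      · simp only [eq_false h1, eq_false h2, if_false]

open Classical in
/-- The sign permutation representation of the RACG. -/
noncomputable def permRep : RACG G →* Equiv.Perm (RACG G × Bool) :=
  PresentedGroup.toGroup (permRep_liftable G)

open Classical in
lemma permRep_gen (i : V) :
    permRep G (racgGen G i) = (flipF_involutive G i).toPerm :=
  PresentedGroup.toGroup.of (permRep_liftable G)

end PermRep

section Nfun
variable {V : Type*} (G : SimpleGraph V)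

/-- The sign cocycle: whether `t` appears an odd number of times in the right inversion
sequence of any word for `g`. -/
noncomputable def nfun (g t : RACG G) : Bool := (permRep G g (t, false)).2

lemma permRep_apply : ∀ (g t : RACG G) (ε : Bool),
    permRep G g (t, ε) = (g * t * g⁻¹, xor ε (nfun G g t)) := by
  classical
  intro g
  refine CoxeterSystem.simple_induction_left (racgCS G)
    (p := fun g => ∀ (t : RACG G) (ε : Bool),
      permRep G g (t, ε) = (g * t * g⁻¹, xor ε (nfun G g t))) g ?_ ?_
  · intro t ε
    have h1 : nfun G 1 t = false := by simp [nfun, map_one]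
    simp [map_one, h1]
  · intro g i ih t ε
    have hstep : ∀ δ : Bool, permRep G ((racgCS G).simple i * g) (t, δ)
        = (racgGen G i * (g * t * g⁻¹) * racgGen G i,
            if g * t * g⁻¹ = racgGen G i then !(xor δ (nfun G g t)) else xor δ (nfun G g t)) := by
      intro δ
      rw [racgCS_simple, map_mul, Equiv.Perm.mul_apply, ih t δ, permRep_gen]
      rfl
    rw [hstep ε]
    have hn : nfun G ((racgCS G).simple i * g) t
        = if g * t * g⁻¹ = racgGen G i then !(nfun G g t) else nfun G g t := by
      rw [nfun, hstep false]
      simp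
    rw [hn]
    refine Prod.ext ?_ ?_
    · show racgGen G i * (g * t * g⁻¹) * racgGen G i
        = ((racgCS G).simple i * g) * t * ((racgCS G).simple i * g)⁻¹
      rw [racgCS_simple, mul_inv_rev, racgGen_inv]
      group
    · show (if g * t * g⁻¹ = racgGen G i then !(xor ε (nfun G g t)) else xor ε (nfun G g t))
        = xor ε (if g * t * g⁻¹ = racgGen G i then !(nfun G g t) else nfun G g t)
      by_cases hc : g * t * g⁻¹ = racgGen G i
      · rw [if_pos hc, if_pos hc]
        cases ε <;> cases nfun G g t <;> rfl
      · rw [if_neg hc, if_neg hc]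

lemma nfun_one (t : RACG G) : nfun G 1 t = false := by simp [nfun, map_one]

lemma nfun_mul (a b t : RACG G) :
    nfun G (a * b) t = xor (nfun G b t) (nfun G a (b * t * b⁻¹)) := by
  have h2 : permRep G (a * b) (t, false)
      = permRep G a (permRep G b (t, false)) := by rw [map_mul]; rfl
  rw [permRep_apply G b t false, permRep_apply G a, permRep_apply G (a * b)] at h2
  have := congrArg Prod.snd h2
  simpa using this

open Classical in
lemma nfun_gen (i : V) (y : RACG G) :
    nfun G (racgGen G i) y = if y = racgGen G i then true else false := by
  rw [nfun, permRep_gen]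
  show (flipF G i (y, false)).2 = _
  simp [flipF]

lemma nfun_mem_ris : ∀ (ω : List V) (t : RACG G),
    nfun G ((racgCS G).wordProd ω) t = true → t ∈ (racgCS G).rightInvSeq ω := by
  classical
  intro ω
  induction ω with
  | nil =>
    intro t h
    rw [CoxeterSystem.wordProd_nil, nfun_one] at h
    exact absurd h (by simp)
  | cons i σ ih =>
    intro t h
    rw [CoxeterSystem.wordProd_cons] at h
    have hs : (racgCS G).simple i = racgGen G i := rfl
    rw [hs, nfun_mul, nfun_gen] at h
    show t ∈ ((racgCS G).wordProd σ)⁻¹ * (racgCS G).simple i * (racgCS G).wordProd σ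
        :: (racgCS G).rightInvSeq σ
    by_cases hc : (racgCS G).wordProd σ * t * ((racgCS G).wordProd σ)⁻¹ = racgGen G i
    · have ht : t = ((racgCS G).wordProd σ)⁻¹ * racgGen G i * (racgCS G).wordProd σ := by
        rw [← hc]
        group
      rw [hs, ht]
      exact List.mem_cons_self
    · rw [if_neg hc] at h
      simp only [Bool.xor_false] at h
      exact List.mem_cons_of_mem _ (ih t h)

lemma mem_ris_erase {ω : List V} {t : RACG G} (h : t ∈ (racgCS G).rightInvSeq ω) :
    ∃ j < ω.length, (racgCS G).wordProd ω * t = (racgCS G).wordProd (ω.eraseIdx j) := by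
  obtain ⟨j, hj, hget⟩ := List.mem_iff_getElem.mp h
  have hjlen : j < ω.length := by
    rwa [CoxeterSystem.length_rightInvSeq] at hj
  refine ⟨j, hjlen, ?_⟩
  have hgetD : ((racgCS G).rightInvSeq ω).getD j 1 = t := by
    rw [List.getD_eq_getElem?_getD, List.getElem?_eq_getElem hj]
    simpa using hget
  rw [← hgetD]
  exact (racgCS G).wordProd_mul_getD_rightInvSeq ω j

lemma nfun_of_descent {g : RACG G} {b : V}
    (h : (racgCS G).length (g * racgGen G b) < (racgCS G).length g) :
    nfun G g (racgGen G b) = true := by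
  classical
  have hg : (g * racgGen G b) * racgGen G b = g := by
    rw [mul_assoc, racgGen_sq, mul_one]
  have hfalse : nfun G (g * racgGen G b) (racgGen G b) = false := by
    by_contra htrue
    rw [Bool.not_eq_false] at htrue
    obtain ⟨ω, hlen, hword⟩ := (racgCS G).exists_reduced_word (g * racgGen G b)
    rw [hword] at htrue
    obtain ⟨j, hj, herase⟩ := mem_ris_erase G (nfun_mem_ris G ω _ htrue)
    rw [← hword] at herase
    rw [hg] at herase
    have hle := (racgCS G).length_wordProd_le (ω.eraseIdx j)
    rw [← herase] at hle
    have hel : (ω.eraseIdx j).length = ω.length - 1 := by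
      rw [List.length_eraseIdx_of_lt hj]
    have hlen2 : ω.length = (racgCS G).length (g * racgGen G b) := by
      rw [hword]; exact hlen.symm
    omega
  have hmul := nfun_mul G (g * racgGen G b) (racgGen G b) (racgGen G b)
  rw [hg] at hmul
  have harg : racgGen G b * racgGen G b * (racgGen G b)⁻¹ = racgGen G b := by
    rw [racgGen_sq, one_mul, racgGen_inv]
  rw [harg, hfalse, nfun_gen, if_pos rfl] at hmul
  simpa using hmul

/-- The (right) exchange condition. -/
lemma right_exchange {g : RACG G} {b : V}
    (hlt : (racgCS G).length (g * racgGen G b) < (racgCS G).length g)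
    {ω : List V} (hω : (racgCS G).wordProd ω = g) :
    ∃ j < ω.length, g * racgGen G b = (racgCS G).wordProd (ω.eraseIdx j) := by
  have hn := nfun_of_descent G hlt
  rw [← hω] at hn ⊢
  exact mem_ris_erase G (nfun_mem_ris G ω _ hn)

end Nfun

section Parabolic
variable {V : Type*} (G : SimpleGraph V)

lemma special_mem_iff {S : Set V} {g : RACG G} :
    g ∈ specialSubgroup G S ↔
      ∃ ω : List V, (∀ x ∈ ω, x ∈ S) ∧ (racgCS G).wordProd ω = g := by
  constructor
  · intro hg
    induction hg using Subgroup.closure_induction'' with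
    | one => exact ⟨[], by simp, by simp⟩
    | mem y hy =>
      obtain ⟨i, hi, rfl⟩ := hy
      exact ⟨[i], by simpa using hi, by
        rw [CoxeterSystem.wordProd_singleton]; rfl⟩
    | inv_mem y hy =>
      obtain ⟨i, hi, rfl⟩ := hy
      refine ⟨[i], by simpa using hi, by
        rw [CoxeterSystem.wordProd_singleton, racgCS_simple, racgGen_inv]⟩
    | mul y z _ _ ihy ihz =>
      obtain ⟨ω₁, hS₁, hπ₁⟩ := ihy
      obtain ⟨ω₂, hS₂, hπ₂⟩ := ihz
      refine ⟨ω₁ ++ ω₂, ?_, ?_⟩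
      · intro x hx
        rcases List.mem_append.mp hx with h | h
        · exact hS₁ x h
        · exact hS₂ x h
      · rw [CoxeterSystem.wordProd_append, hπ₁, hπ₂]
  · rintro ⟨ω, hS, rfl⟩
    induction ω with
    | nil =>
      rw [CoxeterSystem.wordProd_nil]
      exact Subgroup.one_mem _
    | cons i σ ih =>
      rw [CoxeterSystem.wordProd_cons]
      refine Subgroup.mul_mem _ ?_ (ih fun x hx => hS x (List.mem_cons_of_mem _ hx))
      exact Subgroup.subset_closure ⟨i, hS i (List.mem_cons_self), rfl⟩

/-- Any word can be replaced by a reduced word with letters among its own letters. -/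
lemma exists_reduced_subword : ∀ (ω : List V),
    ∃ ω' : List V, (racgCS G).wordProd ω' = (racgCS G).wordProd ω ∧
      ω'.length = (racgCS G).length ((racgCS G).wordProd ω) ∧ ∀ x ∈ ω', x ∈ ω := by
  suffices H : ∀ (n : ℕ) (ω : List V), ω.length = n →
      ∃ ω' : List V, (racgCS G).wordProd ω' = (racgCS G).wordProd ω ∧
        ω'.length = (racgCS G).length ((racgCS G).wordProd ω) ∧ ∀ x ∈ ω', x ∈ ω by
    exact fun ω => H ω.length ω rfl
  intro n
  induction n using Nat.strong_induction_on with
  | _ n ih =>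
    intro ω hn
    rcases List.eq_nil_or_concat ω with rfl | ⟨σ, i, rfl⟩
    · exact ⟨[], rfl, by simp, by simp⟩
    · simp only [List.concat_eq_append] at hn ⊢
      have hσlen : σ.length < n := by
        rw [← hn]
        simp
      obtain ⟨σ', hπ', hlen', hsub'⟩ := ih σ.length hσlen σ rfl
      have hsi : (racgCS G).simple i = racgGen G i := rfl
      have hconc : (racgCS G).wordProd (σ ++ [i])
          = (racgCS G).wordProd σ * racgGen G i := by
        rw [CoxeterSystem.wordProd_append, CoxeterSystem.wordProd_singleton]
        rfl
      have hdich := (racgCS G).length_mul_simple ((racgCS G).wordProd σ) i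
      rw [hsi] at hdich
      rcases hdich with hp | hm
      · refine ⟨σ' ++ [i], ?_, ?_, ?_⟩
        · rw [CoxeterSystem.wordProd_append, CoxeterSystem.wordProd_append, hπ']
        · rw [hconc, hp]
          simp [hlen']
        · intro x hx
          rcases List.mem_append.mp hx with h | h
          · exact List.mem_append.mpr (Or.inl (hsub' x h))
          · exact List.mem_append.mpr (Or.inr h)
      · have hσpos : 0 < (racgCS G).length ((racgCS G).wordProd σ) := by
          rcases Nat.eq_zero_or_pos ((racgCS G).length ((racgCS G).wordProd σ)) with h0 | h
          · exfalso
            have h1 : (racgCS G).wordProd σ = 1 := (racgCS G).length_eq_zero_iff.mp h0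
            have h2 : (racgCS G).length (racgGen G i) = 1 := by
              have := (racgCS G).length_simple i
              rwa [hsi] at this
            rw [h1, one_mul] at hm
            rw [(racgCS G).length_one] at hm
            omega
          · exact h
        have hlt : (racgCS G).length ((racgCS G).wordProd σ * racgGen G i)
            < (racgCS G).length ((racgCS G).wordProd σ) := by omega
        obtain ⟨j, hj, herase⟩ := right_exchange G hlt hπ'
        refine ⟨σ'.eraseIdx j, herase.symm.trans hconc.symm, ?_, ?_⟩
        · rw [hconc, List.length_eraseIdx_of_lt hj, hlen']
          omega
        · intro x hx
          exact List.mem_append.mpr (Or.inl (hsub' x (List.mem_of_mem_eraseIdx hx)))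

/-- Elements of a special subgroup have reduced words with letters in `S`. -/
lemma exists_reduced_special_word {S : Set V} {g : RACG G} (hg : g ∈ specialSubgroup G S) :
    ∃ ω : List V, (racgCS G).wordProd ω = g ∧
      ω.length = (racgCS G).length g ∧ ∀ x ∈ ω, x ∈ S := by
  obtain ⟨ω, hS, rfl⟩ := (special_mem_iff G).mp hg
  obtain ⟨ω', hπ', hlen', hsub'⟩ := exists_reduced_subword G ω
  exact ⟨ω', hπ', hlen', fun x hx => hS x (hsub' x hx)⟩

/-- Right descents of elements of special subgroups lie in the generating set. -/
lemma right_descent_mem {S : Set V} {g : RACG G} (hg : g ∈ specialSubgroup G S) {b : V}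
    (hlt : (racgCS G).length (g * racgGen G b) < (racgCS G).length g) : b ∈ S := by
  obtain ⟨ω, hπ, _, hS⟩ := exists_reduced_special_word G hg
  obtain ⟨j, hj, herase⟩ := right_exchange G hlt hπ
  have hmem : g * racgGen G b ∈ specialSubgroup G S := by
    rw [herase]
    exact (special_mem_iff G).mpr ⟨ω.eraseIdx j,
      fun x hx => hS x (List.mem_of_mem_eraseIdx hx), rfl⟩
  have : racgGen G b ∈ specialSubgroup G S := by
    have := Subgroup.mul_mem _ (Subgroup.inv_mem _ hg) hmem
    rwa [← mul_assoc, inv_mul_cancel, one_mul] at this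
  exact racgGen_mem_special G this

lemma left_descent_mem {S : Set V} {g : RACG G} (hg : g ∈ specialSubgroup G S) {a : V}
    (hlt : (racgCS G).length (racgGen G a * g) < (racgCS G).length g) : a ∈ S := by
  refine right_descent_mem G (Subgroup.inv_mem _ hg) (b := a) ?_
  have h1 : (racgCS G).length (g⁻¹ * racgGen G a) = (racgCS G).length (racgGen G a * g) := by
    rw [← (racgCS G).length_inv]
    congr 1
    rw [mul_inv_rev, inv_inv, racgGen_inv]
  rw [h1, (racgCS G).length_inv]
  exact hlt

end Parabolic

section Coset
variable {V : Type*} (G : SimpleGraph V)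

/-- If `u` is of minimal length in its coset `u W_S`, lengths add. -/
lemma min_coset_length_add {S : Set V} {u : RACG G}
    (hmin : ∀ x ∈ specialSubgroup G S, (racgCS G).length u ≤ (racgCS G).length (u * x)) :
    ∀ x ∈ specialSubgroup G S,
      (racgCS G).length (u * x) = (racgCS G).length u + (racgCS G).length x := by
  suffices H : ∀ (n : ℕ) (x : RACG G), x ∈ specialSubgroup G S → (racgCS G).length x = n →
      (racgCS G).length (u * x) = (racgCS G).length u + (racgCS G).length x by
    exact fun x hx => H ((racgCS G).length x) x hx rfl
  intro n
  induction n using Nat.strong_induction_on with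
  | _ n ih =>
    intro x hx hxn
    by_cases hx1 : x = 1
    · simp [hx1]
    · obtain ⟨b, hdes⟩ := (racgCS G).exists_rightDescent_of_ne_one hx1
      have hdes' : (racgCS G).length (x * racgGen G b) < (racgCS G).length x := hdes
      have hbS : b ∈ S := right_descent_mem G hx hdes'
      set x' := x * racgGen G b with hx'def
      have hx' : x' ∈ specialSubgroup G S :=
        Subgroup.mul_mem _ hx (Subgroup.subset_closure ⟨b, hbS, rfl⟩)
      have hxeq : x = x' * racgGen G b := by
        rw [hx'def, mul_assoc, racgGen_sq, mul_one]
      have hdich := (racgCS G).length_mul_simple x b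
      have hsb : (racgCS G).simple b = racgGen G b := rfl
      rw [hsb] at hdich
      rw [← hx'def] at hdich
      have hlenx' : (racgCS G).length x' + 1 = (racgCS G).length x := by
        rcases hdich with h | h
        · omega
        · exact h
      have hIH : (racgCS G).length (u * x')
          = (racgCS G).length u + (racgCS G).length x' := by
        refine ih ((racgCS G).length x') (by omega) x' hx' rfl
      have hdich2 := (racgCS G).length_mul_simple (u * x') b
      rw [hsb] at hdich2
      rcases hdich2 with h2 | h2
      · -- increases: done
        have hfold : u * x = (u * x') * racgGen G b := by rw [hxeq]; group
        rw [hfold, h2, hIH]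
        omega
      · -- decreases: contradiction
        exfalso
        have hlt2 : (racgCS G).length ((u * x') * racgGen G b)
            < (racgCS G).length (u * x') := by
          have hne := (racgCS G).length_mul_simple_ne (u * x') b
          rw [hsb] at hne
          omega
        obtain ⟨ωu, hωulen, hωu⟩ := (racgCS G).exists_reduced_word u
        obtain ⟨ωx, hπx, hωxlen, hωxS⟩ := exists_reduced_special_word G hx'
        have hword : (racgCS G).wordProd (ωu ++ ωx) = u * x' := by
          rw [CoxeterSystem.wordProd_append, ← hωu, hπx]
        obtain ⟨j, hj, herase⟩ := right_exchange G hlt2 hword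
        rcases Nat.lt_or_ge j ωu.length with hjlt | hjge
        · -- erase in the u part: contradicts minimality
          rw [List.eraseIdx_append_of_lt_length hjlt] at herase
          have hy : x' * racgGen G b * x'⁻¹ ∈ specialSubgroup G S := by
            refine Subgroup.mul_mem _ (Subgroup.mul_mem _ hx' ?_) (Subgroup.inv_mem _ hx')
            exact Subgroup.subset_closure ⟨b, hbS, rfl⟩
          have hu_eq : u * (x' * racgGen G b * x'⁻¹)
              = (racgCS G).wordProd (ωu.eraseIdx j) := by
            rw [CoxeterSystem.wordProd_append] at herase
            have : u * x' * racgGen G b * x'⁻¹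
                = (racgCS G).wordProd (ωu.eraseIdx j) * (racgCS G).wordProd ωx * x'⁻¹ := by
              rw [← herase]
            rw [hπx] at this
            calc u * (x' * racgGen G b * x'⁻¹)
                = u * x' * racgGen G b * x'⁻¹ := by group
              _ = (racgCS G).wordProd (ωu.eraseIdx j) * x' * x'⁻¹ := this
              _ = (racgCS G).wordProd (ωu.eraseIdx j) := by group
          have hle := (racgCS G).length_wordProd_le (ωu.eraseIdx j)
          rw [← hu_eq] at hle
          have hωulen' : ωu.length = (racgCS G).length u := by rw [hωu]; exact hωulen.symm
          rw [List.length_eraseIdx_of_lt hjlt, hωulen'] at hle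
          have := hmin _ hy
          omega
        · -- erase in the x' part: contradicts length of x
          rw [List.eraseIdx_append_of_length_le hjge] at herase
          rw [CoxeterSystem.wordProd_append] at herase
          have hx'eq : x' * racgGen G b
              = (racgCS G).wordProd (ωx.eraseIdx (j - ωu.length)) := by
            have : u * (x' * racgGen G b)
                = u * (racgCS G).wordProd (ωx.eraseIdx (j - ωu.length)) := by
              rw [← mul_assoc, herase, hωu]
            exact mul_left_cancel this
          have hle := (racgCS G).length_wordProd_le (ωx.eraseIdx (j - ωu.length))
          rw [← hx'eq] at hle
          have hjx : j - ωu.length < ωx.length := by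
            rw [List.length_append] at hj
            omega
          rw [List.length_eraseIdx_of_lt hjx, hωxlen] at hle
          rw [← hxeq] at hle
          omega

/-- If `u` has no right descent in `S`, then lengths add on the right by `W_S`. -/
lemma no_descent_length_add {S : Set V} {u : RACG G}
    (hdes : ∀ b ∈ S, (racgCS G).length u < (racgCS G).length (u * racgGen G b)) :
    ∀ x ∈ specialSubgroup G S,
      (racgCS G).length (u * x) = (racgCS G).length u + (racgCS G).length x := by
  have hne : {n | ∃ x ∈ specialSubgroup G S, (racgCS G).length (u * x) = n}.Nonempty :=
    ⟨(racgCS G).length u, 1, Subgroup.one_mem _, by simp⟩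
  obtain ⟨x₀, hx₀, hm⟩ := Nat.sInf_mem hne
  set m := sInf {n | ∃ x ∈ specialSubgroup G S, (racgCS G).length (u * x) = n} with hmdef
  set u₀ := u * x₀ with hu₀
  have hmin₀ : ∀ x ∈ specialSubgroup G S,
      (racgCS G).length u₀ ≤ (racgCS G).length (u₀ * x) := by
    intro x hx
    have : (racgCS G).length (u₀ * x) ∈
        {n | ∃ x ∈ specialSubgroup G S, (racgCS G).length (u * x) = n} := by
      refine ⟨x₀ * x, Subgroup.mul_mem _ hx₀ hx, ?_⟩
      rw [hu₀, mul_assoc]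
    have hge := Nat.sInf_le this
    omega
  have hE₀ := min_coset_length_add G hmin₀
  have hx₀inv : x₀⁻¹ ∈ specialSubgroup G S := Subgroup.inv_mem _ hx₀
  have hueq : u = u₀ * x₀⁻¹ := by rw [hu₀]; group
  have hx₀1 : x₀ = 1 := by
    by_contra hne1
    have hinvne : x₀⁻¹ ≠ 1 := fun h => hne1 (by rwa [inv_eq_one] at h)
    obtain ⟨b, hdesb⟩ := (racgCS G).exists_rightDescent_of_ne_one hinvne
    have hdesb' : (racgCS G).length (x₀⁻¹ * racgGen G b) < (racgCS G).length x₀⁻¹ := hdesb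
    have hbS : b ∈ S := right_descent_mem G hx₀inv hdesb'
    have hz : x₀⁻¹ * racgGen G b ∈ specialSubgroup G S :=
      Subgroup.mul_mem _ hx₀inv (Subgroup.subset_closure ⟨b, hbS, rfl⟩)
    have h1 : (racgCS G).length (u * racgGen G b)
        = (racgCS G).length u₀ + (racgCS G).length (x₀⁻¹ * racgGen G b) := by
      have : u * racgGen G b = u₀ * (x₀⁻¹ * racgGen G b) := by rw [hu₀]; group
      rw [this]
      exact hE₀ _ hz
    have h2 : (racgCS G).length u
        = (racgCS G).length u₀ + (racgCS G).length x₀⁻¹ := by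
      rw [hueq]
      exact hE₀ _ hx₀inv
    have := hdes b hbS
    omega
  have humin : ∀ x ∈ specialSubgroup G S,
      (racgCS G).length u ≤ (racgCS G).length (u * x) := by
    have : u₀ = u := by rw [hu₀, hx₀1, mul_one]
    rw [← this]
    exact hmin₀
  exact min_coset_length_add G humin

/-- Left-handed version: lengths add on the left. -/
lemma no_descent_length_add_left {S : Set V} {u : RACG G}
    (hdes : ∀ a ∈ S, (racgCS G).length u < (racgCS G).length (racgGen G a * u)) :
    ∀ x ∈ specialSubgroup G S,
      (racgCS G).length (x * u) = (racgCS G).length x + (racgCS G).length u := by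
  have hdes' : ∀ b ∈ S, (racgCS G).length u⁻¹ < (racgCS G).length (u⁻¹ * racgGen G b) := by
    intro b hb
    have h1 : (racgCS G).length (u⁻¹ * racgGen G b)
        = (racgCS G).length (racgGen G b * u) := by
      rw [← (racgCS G).length_inv (u⁻¹ * racgGen G b), mul_inv_rev, inv_inv, racgGen_inv]
    rw [h1, (racgCS G).length_inv]
    exact hdes b hb
  intro x hx
  have h2 : (racgCS G).length (x * u) = (racgCS G).length (u⁻¹ * x⁻¹) := by
    rw [← (racgCS G).length_inv (x * u), mul_inv_rev]
  rw [h2, no_descent_length_add G hdes' x⁻¹ (Subgroup.inv_mem _ hx),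
    (racgCS G).length_inv, (racgCS G).length_inv]
  omega

/-- Uniqueness of the minimal coset representative without right `S`-descents. -/
lemma no_descent_coset_unique {S : Set V} {u u' : RACG G}
    (hdes : ∀ b ∈ S, (racgCS G).length u < (racgCS G).length (u * racgGen G b))
    (hdes' : ∀ b ∈ S, (racgCS G).length u' < (racgCS G).length (u' * racgGen G b))
    (h : u⁻¹ * u' ∈ specialSubgroup G S) : u = u' := by
  set v := u⁻¹ * u' with hv
  have h1 : u' = u * v := by rw [hv]; group
  have h2 : u = u' * v⁻¹ := by rw [hv]; group
  have e1 : (racgCS G).length u' = (racgCS G).length u + (racgCS G).length v := by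
    rw [h1]; exact no_descent_length_add G hdes v h
  have e2 : (racgCS G).length u = (racgCS G).length u' + (racgCS G).length v⁻¹ := by
    rw [h2]; exact no_descent_length_add G hdes' v⁻¹ (Subgroup.inv_mem _ h)
  rw [(racgCS G).length_inv] at e2
  have hv0 : (racgCS G).length v = 0 := by omega
  have : v = 1 := (racgCS G).length_eq_zero_iff.mp hv0
  rw [h1, this, mul_one]

end Coset

section MainCore
variable {V : Type*} (G : SimpleGraph V)

lemma racg_core {Γ₁ Γ₂ : Set V} : ∀ (n : ℕ) (w u u' : RACG G),
    (racgCS G).length w = n →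
    w ∈ specialSubgroup G Γ₁ →
    (∀ a ∈ Γ₁, (racgCS G).length u < (racgCS G).length (racgGen G a * u)) →
    (∀ a ∈ Γ₁, (racgCS G).length u' < (racgCS G).length (racgGen G a * u')) →
    (∀ b ∈ Γ₂, (racgCS G).length u < (racgCS G).length (u * racgGen G b)) →
    (∀ b ∈ Γ₂, (racgCS G).length u' < (racgCS G).length (u' * racgGen G b)) →
    u⁻¹ * w * u' ∈ specialSubgroup G Γ₂ →
    w ∈ specialSubgroup G (Γ₁ ∩ Γ₂) ∧ u = u' ∧ u * w = w * u := by
  intro n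
  induction n using Nat.strong_induction_on with
  | _ n ih =>
    intro w u u' hn hw hu_start hu'_start hu_end hu'_end hconj
    by_cases hw1 : w = 1
    · subst hw1
      have hv' : u⁻¹ * u' ∈ specialSubgroup G Γ₂ := by
        have : u⁻¹ * 1 * u' = u⁻¹ * u' := by group
        rwa [this] at hconj
      have huu' : u = u' := no_descent_coset_unique G hu_end hu'_end hv'
      exact ⟨Subgroup.one_mem _, huu', by group⟩
    · obtain ⟨a, hadesc⟩ := (racgCS G).exists_leftDescent_of_ne_one hw1
      have hlt_w : (racgCS G).length (racgGen G a * w) < (racgCS G).length w := hadesc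
      have haΓ₁ : a ∈ Γ₁ := left_descent_mem G hw hlt_w
      set v := u⁻¹ * w * u' with hvdef
      have hv : v ∈ specialSubgroup G Γ₂ := hconj
      have heq : w * u' = u * v := by rw [hvdef]; group
      have hE'left := no_descent_length_add_left G hu'_start
      have hwu' : (racgCS G).length (w * u')
          = (racgCS G).length w + (racgCS G).length u' := hE'left w hw
      have hsaw : racgGen G a * w ∈ specialSubgroup G Γ₁ :=
        Subgroup.mul_mem _ (Subgroup.subset_closure ⟨a, haΓ₁, rfl⟩) hw
      have hsawu' : (racgCS G).length ((racgGen G a * w) * u')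
          = (racgCS G).length (racgGen G a * w) + (racgCS G).length u' := hE'left _ hsaw
      have huv : (racgCS G).length (u * v)
          = (racgCS G).length u + (racgCS G).length v :=
        no_descent_length_add G hu_end v hv
      have hzlt : (racgCS G).length (racgGen G a * (u * v))
          < (racgCS G).length (u * v) := by
        have h1 : racgGen G a * (u * v) = (racgGen G a * w) * u' := by
          rw [← heq]; group
        have h2 : (racgCS G).length (u * v) = (racgCS G).length (w * u') := by rw [heq]
        rw [h1, hsawu', h2, hwu']
        omega
      have hinvlt : (racgCS G).length ((u * v)⁻¹ * racgGen G a)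
          < (racgCS G).length ((u * v)⁻¹) := by
        have h1 : (racgCS G).length ((u * v)⁻¹ * racgGen G a)
            = (racgCS G).length (racgGen G a * (u * v)) := by
          rw [← (racgCS G).length_inv ((u * v)⁻¹ * racgGen G a), mul_inv_rev, inv_inv,
            racgGen_inv]
        rw [h1, (racgCS G).length_inv]
        exact hzlt
      obtain ⟨ωu, hωulen, hωu⟩ := (racgCS G).exists_reduced_word u
      obtain ⟨ωv, hπv, hωvlen, hωvS⟩ := exists_reduced_special_word G hv
      have hword : (racgCS G).wordProd (ωv.reverse ++ ωu.reverse) = (u * v)⁻¹ := by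
        rw [CoxeterSystem.wordProd_append, CoxeterSystem.wordProd_reverse,
          CoxeterSystem.wordProd_reverse, hπv, ← hωu, hvdef]
        group
      obtain ⟨j, hj, herase⟩ := right_exchange G hinvlt hword
      rcases Nat.lt_or_ge j ωv.reverse.length with hjlt | hjge
      · -- erase in the v part
        rw [List.eraseIdx_append_of_lt_length hjlt, CoxeterSystem.wordProd_append,
          CoxeterSystem.wordProd_reverse, ← hωu] at herase
        set q := (racgCS G).wordProd (ωv.reverse.eraseIdx j) with hqdef
        have hq : q ∈ specialSubgroup G Γ₂ := by
          refine (special_mem_iff G).mpr ⟨ωv.reverse.eraseIdx j, ?_, rfl⟩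
          intro x hx
          exact hωvS x (List.mem_reverse.mp (List.mem_of_mem_eraseIdx hx))
        have ht : u⁻¹ * racgGen G a * u = v * q := by
          calc u⁻¹ * racgGen G a * u
              = v * ((u * v)⁻¹ * racgGen G a) * u := by group
            _ = v * (q * u⁻¹) * u := by rw [herase]
            _ = v * q := by group
        have htmem : u⁻¹ * racgGen G a * u ∈ specialSubgroup G Γ₂ := by
          rw [ht]
          exact Subgroup.mul_mem _ hv hq
        have hgu : (racgCS G).length (racgGen G a * u)
            = (racgCS G).length u + 1 := by
          have hd := (racgCS G).length_simple_mul u a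
          have hs : (racgCS G).simple a = racgGen G a := rfl
          rw [hs] at hd
          have := hu_start a haΓ₁
          omega
        have hut : u * (u⁻¹ * racgGen G a * u) = racgGen G a * u := by group
        have hℓut : (racgCS G).length (u * (u⁻¹ * racgGen G a * u))
            = (racgCS G).length u + (racgCS G).length (u⁻¹ * racgGen G a * u) :=
          no_descent_length_add G hu_end _ htmem
        have ht1 : (racgCS G).length (u⁻¹ * racgGen G a * u) = 1 := by
          rw [hut, hgu] at hℓut
          omega
        obtain ⟨c, hc⟩ := (racgCS G).length_eq_one_iff.mp ht1
        have hsc : (racgCS G).simple c = racgGen G c := rfl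
        rw [hsc] at hc
        have hcΓ₂ : c ∈ Γ₂ := racgGen_mem_special G (hc ▸ htmem)
        have hca : c = a := by
          refine racgGen_injective_ab G ?_
          rw [← hc, map_mul, map_mul, map_inv]
          have habel : ∀ x y : Multiplicative (V → ZMod 2), x⁻¹ * y * x = y := by
            intro x y
            rw [mul_comm x⁻¹ y, mul_assoc, inv_mul_cancel, mul_one]
          exact habel _ _
        have hta : u⁻¹ * racgGen G a * u = racgGen G a := by rw [hc, hca]
        have hcomm_u : u * racgGen G a = racgGen G a * u := by
          have := congrArg (fun y => u * y) hta
          simpa [← mul_assoc, mul_inv_cancel, one_mul] using this.symm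
        have haΓ₂ : a ∈ Γ₂ := hca ▸ hcΓ₂
        set wt := racgGen G a * w with hwtdef
        have hwt_lt : (racgCS G).length wt < n := by rw [← hn]; exact hlt_w
        have hwtΓ₁ : wt ∈ specialSubgroup G Γ₁ := hsaw
        have hvt_eq : u⁻¹ * wt * u' = racgGen G a * v := by
          calc u⁻¹ * wt * u'
              = (u⁻¹ * racgGen G a * u) * (u⁻¹ * w * u') := by rw [hwtdef]; group
            _ = racgGen G a * v := by rw [hta, hvdef]
        have hvtmem : u⁻¹ * wt * u' ∈ specialSubgroup G Γ₂ := by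
          rw [hvt_eq]
          exact Subgroup.mul_mem _ (Subgroup.subset_closure ⟨a, haΓ₂, rfl⟩) hv
        obtain ⟨hwtmem, huu', hcomm_wt⟩ := ih ((racgCS G).length wt) hwt_lt wt u u' rfl
          hwtΓ₁ hu_start hu'_start hu_end hu'_end hvtmem
        have hw_eq : racgGen G a * wt = w := by
          rw [hwtdef, ← mul_assoc, racgGen_sq, one_mul]
        refine ⟨?_, huu', ?_⟩
        · rw [← hw_eq]
          exact Subgroup.mul_mem _ (Subgroup.subset_closure ⟨a, ⟨haΓ₁, haΓ₂⟩, rfl⟩) hwtmem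
        · calc u * w = u * (racgGen G a * wt) := by rw [hw_eq]
            _ = (u * racgGen G a) * wt := by group
            _ = (racgGen G a * u) * wt := by rw [hcomm_u]
            _ = racgGen G a * (u * wt) := by group
            _ = racgGen G a * (wt * u) := by rw [hcomm_wt]
            _ = (racgGen G a * wt) * u := by group
            _ = w * u := by rw [hw_eq]
      · -- erase in the u part: contradiction
        exfalso
        rw [List.eraseIdx_append_of_length_le hjge, CoxeterSystem.wordProd_append,
          CoxeterSystem.wordProd_reverse, hπv] at herase
        have hcancel : u⁻¹ * racgGen G a
            = (racgCS G).wordProd (ωu.reverse.eraseIdx (j - ωv.reverse.length)) := by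
          have h5 : v⁻¹ * (u⁻¹ * racgGen G a)
              = v⁻¹ * (racgCS G).wordProd (ωu.reverse.eraseIdx (j - ωv.reverse.length)) := by
            calc v⁻¹ * (u⁻¹ * racgGen G a) = (u * v)⁻¹ * racgGen G a := by group
              _ = _ := herase
          exact mul_left_cancel h5
        have hle := (racgCS G).length_wordProd_le (ωu.reverse.eraseIdx (j - ωv.reverse.length))
        rw [← hcancel] at hle
        have hjx : j - ωv.reverse.length < ωu.reverse.length := by
          rw [List.length_append] at hj
          omega
        rw [List.length_eraseIdx_of_lt hjx] at hle
        have h6 : (racgCS G).length (u⁻¹ * racgGen G a)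
            = (racgCS G).length (racgGen G a * u) := by
          rw [← (racgCS G).length_inv (u⁻¹ * racgGen G a), mul_inv_rev, inv_inv, racgGen_inv]
        have h7 := hu_start a haΓ₁
        rw [h6] at hle
        simp only [List.length_reverse] at hle
        rw [(show ωu.length = (racgCS G).length u by rw [hωu]; exact hωulen.symm)] at hle
        omega

end MainCore

/-- Word combinatorics lemma: if `w ∈ W_{Γ₁}`, `u, u'` have no letters from `Γ₁` at the
start and no letters from `Γ₂` at the end, and `u⁻¹ w u' ∈ W_{Γ₂}`, then
`w ∈ W_{Γ₁ ∩ Γ₂}`, `u = u'` and `u` commutes with `w`. -/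
theorem racg_word_combinatorics
    {V : Type*} [Fintype V] (G : SimpleGraph V) (Γ₁ Γ₂ : Set V)
    (w u u' : RACG G)
    (hw : w ∈ specialSubgroup G Γ₁)
    (hu_start : ∀ a ∈ Γ₁, wordLength G u < wordLength G (racgGen G a * u))
    (hu'_start : ∀ a ∈ Γ₁, wordLength G u' < wordLength G (racgGen G a * u'))
    (hu_end : ∀ a ∈ Γ₂, wordLength G u < wordLength G (u * racgGen G a))
    (hu'_end : ∀ a ∈ Γ₂, wordLength G u' < wordLength G (u' * racgGen G a))
    (hconj : u⁻¹ * w * u' ∈ specialSubgroup G Γ₂) :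
    w ∈ specialSubgroup G (Γ₁ ∩ Γ₂) ∧ u = u' ∧ u * w = w * u := by
  simp only [wordLength_eq] at hu_start hu'_start hu_end hu'_end
  exact racg_core G ((racgCS G).length w) w u u' rfl hw
    hu_start hu'_start hu_end hu'_end hconj
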